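/- Let (F_t)_{t∈ℕ} be a filtration and let (X_t)_{t≥1} be a sequence of {0,1}-valued random variables such that X_t is F_t-measurable and P(X_t = 1 | F_{t−1}) = P_t, where P_t is F_{t−1}-measurable and takes values in [0,1]. Then for every δ > 0, P( ∃ n : Σ_{t=1}^n X_t < (1/2) Σ_{t=1}^n P_t − log(1/δ) ) ≤ δ. -/

import Mathlib

open Finset MeasureTheory

namespace BSDAux

variable {Ω : Type*}

/-- Denominator of the likelihood-ratio factor. -/
noncomputable def D (P : ℕ → Ω → ℝ) (t : ℕ) (ω : Ω) : ℝ :=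
  1 - P t ω * (1 - Real.exp (-1))

/-- The exponential martingale. -/
noncomputable def F (X P : ℕ → Ω → ℝ) (n : ℕ) (ω : Ω) : ℝ :=
  ∏ t ∈ Finset.Icc 1 n, Real.exp (-(X t ω)) / D P t ω

lemma exp_neg_one_lt_half : Real.exp (-1) < 1 / 2 := by
  have h2 : (2 : ℝ) < Real.exp 1 := lt_trans (by norm_num) Real.exp_one_gt_d9
  have hpos := Real.exp_pos (1 : ℝ)
  have hmul : (Real.exp 1)⁻¹ * Real.exp 1 = 1 := inv_mul_cancel₀ (ne_of_gt hpos)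
  rw [Real.exp_neg]
  nlinarith [inv_pos.2 hpos]

lemma D_pos {P : ℕ → Ω → ℝ} (hP01 : ∀ t ω, P t ω ∈ Set.Icc (0 : ℝ) 1) (t : ℕ) (ω : Ω) :
    Real.exp (-1) ≤ D P t ω := by
  obtain ⟨h0, h1⟩ := hP01 t ω
  have := Real.exp_pos (-1 : ℝ)
  have hlt : Real.exp (-1) < 1 := by have := exp_neg_one_lt_half; linarith
  unfold D; nlinarith

lemma D_le_exp {P : ℕ → Ω → ℝ} (t : ℕ) (ω : Ω) :
    D P t ω ≤ Real.exp (-(P t ω * (1 - Real.exp (-1)))) := by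
  have := Real.add_one_le_exp (-(P t ω * (1 - Real.exp (-1))))
  unfold D; linarith

lemma factor_nonneg {X P : ℕ → Ω → ℝ} (hP01 : ∀ t ω, P t ω ∈ Set.Icc (0 : ℝ) 1)
    (t : ℕ) (ω : Ω) : 0 ≤ Real.exp (-(X t ω)) / D P t ω :=
  div_nonneg (Real.exp_pos _).le (le_trans (Real.exp_pos _).le (D_pos hP01 t ω))

lemma factor_le {X P : ℕ → Ω → ℝ} (hX01 : ∀ t ω, X t ω = 0 ∨ X t ω = 1)
    (hP01 : ∀ t ω, P t ω ∈ Set.Icc (0 : ℝ) 1) (t : ℕ) (ω : Ω) :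
    Real.exp (-(X t ω)) / D P t ω ≤ Real.exp 1 := by
  have hX : 0 ≤ X t ω := by rcases hX01 t ω with h | h <;> rw [h] <;> norm_num
  have hnum : Real.exp (-(X t ω)) ≤ 1 := by
    rw [Real.exp_le_one_iff]; linarith
  have hD := D_pos hP01 t ω
  have hepos := Real.exp_pos (-1 : ℝ)
  calc Real.exp (-(X t ω)) / D P t ω ≤ 1 / Real.exp (-1) :=
        div_le_div₀ (by norm_num) hnum hepos hD
    _ = Real.exp 1 := by rw [Real.exp_neg, one_div, inv_inv]

lemma F_nonneg {X P : ℕ → Ω → ℝ} (hP01 : ∀ t ω, P t ω ∈ Set.Icc (0 : ℝ) 1)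
    (n : ℕ) (ω : Ω) : 0 ≤ F X P n ω :=
  Finset.prod_nonneg fun t _ => factor_nonneg hP01 t ω

lemma F_le {X P : ℕ → Ω → ℝ} (hX01 : ∀ t ω, X t ω = 0 ∨ X t ω = 1)
    (hP01 : ∀ t ω, P t ω ∈ Set.Icc (0 : ℝ) 1) (n : ℕ) (ω : Ω) :
    F X P n ω ≤ Real.exp 1 ^ n := by
  calc F X P n ω ≤ ∏ _t ∈ Finset.Icc 1 n, Real.exp 1 :=
        Finset.prod_le_prod (fun t _ => factor_nonneg hP01 t ω)
          (fun t _ => factor_le hX01 hP01 t ω)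
    _ = Real.exp 1 ^ n := by rw [Finset.prod_const, Nat.card_Icc]; norm_num

/-- Key pointwise lower bound. -/
lemma F_ge {X P : ℕ → Ω → ℝ} (hP01 : ∀ t ω, P t ω ∈ Set.Icc (0 : ℝ) 1)
    (n : ℕ) (ω : Ω) :
    Real.exp (∑ t ∈ Finset.Icc 1 n, ((1 - Real.exp (-1)) * P t ω - X t ω))
      ≤ F X P n ω := by
  rw [Real.exp_sum]
  refine Finset.prod_le_prod (fun t _ => (Real.exp_pos _).le) (fun t _ => ?_)
  have hD : 0 < D P t ω := lt_of_lt_of_le (Real.exp_pos _) (D_pos hP01 t ω)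
  rw [le_div_iff₀ hD]
  calc Real.exp ((1 - Real.exp (-1)) * P t ω - X t ω) * D P t ω
      ≤ Real.exp ((1 - Real.exp (-1)) * P t ω - X t ω) *
          Real.exp (-(P t ω * (1 - Real.exp (-1)))) :=
        mul_le_mul_of_nonneg_left (D_le_exp t ω) (Real.exp_pos _).le
    _ = Real.exp (-(X t ω)) := by rw [← Real.exp_add]; ring_nf

end BSDAux

open BSDAux in
/-- time-uniform lower deviation bound for a sum of Bernoulli random
variables with predictable conditional success probabilities. `X t` takes values in
`{0,1}`, is `ℱ t`-measurable, and its conditional success probability given `ℱ (t-1)`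
is `P t` (encoded, since `X t ∈ {0,1}`, as `E[X t | ℱ (t−1)] = P t`), where `P t` is
`ℱ (t-1)`-measurable with values in `[0,1]`. -/
theorem bernoulli_sequence_deviation
    {Ω : Type*} {m0 : MeasurableSpace Ω} (μ : Measure Ω) [IsProbabilityMeasure μ]
    (ℱ : Filtration ℕ m0)
    (X P : ℕ → Ω → ℝ)
    (hX01 : ∀ t ω, X t ω = 0 ∨ X t ω = 1)
    (hXadapted : ∀ t, 1 ≤ t → StronglyMeasurable[ℱ t] (X t))
    (hPpred : ∀ t, 1 ≤ t → StronglyMeasurable[ℱ (t - 1)] (P t))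
    (hP01 : ∀ t ω, P t ω ∈ Set.Icc (0 : ℝ) 1)
    (hcond : ∀ t, 1 ≤ t → μ[X t | ℱ (t - 1)] =ᵐ[μ] P t)
    (δ : ℝ) (hδ : 0 < δ) :
    μ {ω | ∃ n : ℕ,
        ∑ t ∈ Finset.Icc 1 n, X t ω
          < (∑ t ∈ Finset.Icc 1 n, P t ω) / 2 - Real.log (1 / δ)}
      ≤ ENNReal.ofReal δ := by
  classical
  -- measurability of F
  have hFmeas : ∀ n, StronglyMeasurable[ℱ n] (F X P n) := by
    intro n
    apply Measurable.stronglyMeasurable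
    apply Finset.measurable_prod
    intro t ht
    rw [Finset.mem_Icc] at ht
    have hXm : Measurable[ℱ n] (X t) := ((hXadapted t ht.1).mono (ℱ.mono ht.2)).measurable
    have hPm : Measurable[ℱ n] (P t) :=
      ((hPpred t ht.1).mono (ℱ.mono (le_trans (Nat.sub_le t 1) ht.2))).measurable
    exact (Real.measurable_exp.comp hXm.neg).div
      (measurable_const.sub (hPm.mul measurable_const))
  -- integrability of F
  have hFint : ∀ n, Integrable (F X P n) μ := by
    intro n
    refine Integrable.mono' (integrable_const (Real.exp 1 ^ n))
      ((hFmeas n).mono (ℱ.le n)).aestronglyMeasurable (ae_of_all _ fun ω => ?_)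
    rw [Real.norm_eq_abs, abs_of_nonneg (F_nonneg hP01 n ω)]
    exact F_le hX01 hP01 n ω
  -- F is a martingale
  have hmart : Martingale (F X P) ℱ μ := by
    refine martingale_nat hFmeas hFint (fun i => ?_)
    set g : Ω → ℝ := fun ω => F X P i ω / D P (i + 1) ω with hg_def
    have hDpos : ∀ ω, 0 < D P (i + 1) ω :=
      fun ω => lt_of_lt_of_le (Real.exp_pos _) (D_pos hP01 _ ω)
    have hPim : StronglyMeasurable[ℱ i] (P (i + 1)) := by
      have := hPpred (i + 1) (by omega); simpa using this
    have hg_sm : StronglyMeasurable[ℱ i] g :=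
      Measurable.stronglyMeasurable ((hFmeas i).measurable.div
        (measurable_const.sub (hPim.measurable.mul measurable_const)))
    have hg_bd : ∀ ω, |g ω| ≤ Real.exp 1 ^ i * Real.exp 1 := by
      intro ω
      have h1 : 0 ≤ g ω := div_nonneg (F_nonneg hP01 i ω) (hDpos ω).le
      rw [abs_of_nonneg h1]
      have h2 : g ω ≤ F X P i ω / Real.exp (-1) :=
        div_le_div_of_nonneg_left (F_nonneg hP01 i ω) (Real.exp_pos _) (D_pos hP01 _ ω)
      refine le_trans h2 ?_
      rw [Real.exp_neg, div_eq_mul_inv, inv_inv]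
      exact mul_le_mul_of_nonneg_right (F_le hX01 hP01 i ω) (Real.exp_pos _).le
    have hg_int : Integrable g μ :=
      Integrable.mono' (integrable_const _)
        ((hg_sm.mono (ℱ.le i)).aestronglyMeasurable) (ae_of_all _ hg_bd)
    have hX_abs : ∀ ω, |X (i + 1) ω| ≤ 1 := by
      intro ω; rcases hX01 (i + 1) ω with h | h <;> rw [h] <;> norm_num
    have hX_int : Integrable (X (i + 1)) μ :=
      Integrable.mono' (integrable_const 1)
        (((hXadapted (i + 1) (by omega)).mono (ℱ.le _)).aestronglyMeasurable)
        (ae_of_all _ hX_abs)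
    have hgX_int : Integrable (g * X (i + 1)) μ := by
      refine Integrable.mono' (integrable_const (Real.exp 1 ^ i * Real.exp 1))
        (((hg_sm.mono (ℱ.le i)).mul
          ((hXadapted (i + 1) (by omega)).mono (ℱ.le _))).aestronglyMeasurable)
        (ae_of_all _ fun ω => ?_)
      rw [Pi.mul_apply, Real.norm_eq_abs, abs_mul]
      calc |g ω| * |X (i + 1) ω| ≤ |g ω| * 1 :=
            mul_le_mul_of_nonneg_left (hX_abs ω) (abs_nonneg _)
        _ ≤ Real.exp 1 ^ i * Real.exp 1 := by rw [mul_one]; exact hg_bd ω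
    -- decomposition of F (i+1)
    have hrep : F X P (i + 1) = g - (1 - Real.exp (-1)) • (g * X (i + 1)) := by
      funext ω
      have hsucc : (1 : ℕ) ≤ i + 1 := by omega
      have : F X P (i + 1) ω = F X P i ω * (Real.exp (-(X (i + 1) ω)) / D P (i + 1) ω) := by
        unfold F
        rw [← Finset.prod_Icc_succ_top hsucc]
      rw [this]
      have hXcase : Real.exp (-(X (i + 1) ω)) =
          1 - (1 - Real.exp (-1)) * X (i + 1) ω := by
        rcases hX01 (i + 1) ω with h | h <;> rw [h] <;> simp
      rw [hXcase]
      simp only [Pi.sub_apply, Pi.smul_apply, Pi.mul_apply, smul_eq_mul, hg_def]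
      field_simp
    have hcondX : μ[X (i + 1) | ℱ i] =ᵐ[μ] P (i + 1) := by
      have := hcond (i + 1) (by omega); simpa using this
    have h1 : μ[g | ℱ i] = g := condExp_of_stronglyMeasurable (ℱ.le i) hg_sm hg_int
    have h2 : μ[g * X (i + 1) | ℱ i] =ᵐ[μ] g * μ[X (i + 1) | ℱ i] :=
      condExp_mul_of_stronglyMeasurable_left hg_sm hgX_int hX_int
    have h3 : μ[F X P (i + 1) | ℱ i] =ᵐ[μ]
        μ[g | ℱ i] - μ[(1 - Real.exp (-1)) • (g * X (i + 1)) | ℱ i] := by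
      rw [hrep]
      exact condExp_sub hg_int (hgX_int.smul _) _
    have h4 : μ[(1 - Real.exp (-1)) • (g * X (i + 1)) | ℱ i] =ᵐ[μ]
        (1 - Real.exp (-1)) • (g * P (i + 1)) := by
      refine (condExp_smul _ _ _).trans ?_
      filter_upwards [h2, hcondX] with ω hω hω'
      simp only [Pi.smul_apply, smul_eq_mul, hω, Pi.mul_apply, hω']
    have hfinal : μ[F X P (i + 1) | ℱ i] =ᵐ[μ] F X P i := by
      refine h3.trans ?_
      rw [h1]
      filter_upwards [h4] with ω hω
      rw [Pi.sub_apply, hω]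
      simp only [Pi.smul_apply, Pi.mul_apply, smul_eq_mul, hg_def]
      have hD := hDpos ω
      field_simp
      unfold D
      ring
    exact hfinal.symm
  -- total integral is 1
  have hint_one : ∀ n, ∫ ω, F X P n ω ∂μ = 1 := by
    intro n
    have h0 : μ[F X P n | ℱ 0] =ᵐ[μ] F X P 0 := hmart.condExp_ae_eq (Nat.zero_le n)
    have : ∫ ω, F X P n ω ∂μ = ∫ ω, F X P 0 ω ∂μ := by
      rw [← integral_condExp (ℱ.le 0)]
      exact integral_congr_ae h0
    rw [this]
    have hF0 : F X P 0 = fun _ => (1 : ℝ) := by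
      funext ω; unfold F; simp
    rw [hF0]
    simp
  -- Doob + monotone union
  set ε : NNReal := Real.toNNReal (1 / δ) with hε_def
  set A : ℕ → Set Ω := fun n =>
    {ω | (ε : ℝ) ≤ (Finset.range (n + 1)).sup' Finset.nonempty_range_add_one
      fun k => F X P k ω} with hA_def
  have hεcoe : (ε : ℝ) = 1 / δ := Real.coe_toNNReal _ (by positivity)
  have hAbound : ∀ n, μ (A n) ≤ ENNReal.ofReal δ := by
    intro n
    have hmax := maximal_ineq (μ := μ) hmart.submartingale
      (fun k ω => F_nonneg hP01 k ω) (ε := ε) n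
    have hsetint : ENNReal.ofReal (∫ ω in {ω | (ε : ℝ) ≤ (Finset.range (n + 1)).sup'
        Finset.nonempty_range_add_one fun k => F X P k ω}, F X P n ω ∂μ) ≤ 1 := by
      have h1 : (∫ ω in {ω | (ε : ℝ) ≤ (Finset.range (n + 1)).sup'
          Finset.nonempty_range_add_one fun k => F X P k ω}, F X P n ω ∂μ)
          ≤ ∫ ω, F X P n ω ∂μ :=
        setIntegral_le_integral (hFint n) (ae_of_all _ fun ω => F_nonneg hP01 n ω)
      rw [hint_one n] at h1
      calc ENNReal.ofReal _ ≤ ENNReal.ofReal 1 := ENNReal.ofReal_le_ofReal h1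
        _ = 1 := ENNReal.ofReal_one
    have hle1 : (ε : ENNReal) * μ (A n) ≤ 1 := by
      refine le_trans ?_ hsetint
      simpa [smul_eq_mul, hA_def] using hmax
    have : μ (A n) ≤ (ε : ENNReal)⁻¹ := by
      rw [ENNReal.le_inv_iff_mul_le, mul_comm]
      exact hle1
    refine le_trans this (le_of_eq ?_)
    have hcoe : (ε : ENNReal) = ENNReal.ofReal (1 / δ) := rfl
    rw [hcoe, one_div, ENNReal.ofReal_inv_of_pos hδ, inv_inv]
  have hmono : Monotone A := by
    intro m n hmn ω hω
    simp only [hA_def, Set.mem_setOf_eq] at hω ⊢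
    refine le_trans hω (Finset.sup'_mono _ ?_ Finset.nonempty_range_add_one)
    exact Finset.range_subset_range.2 (by omega)
  have hsubset : {ω | ∃ n : ℕ,
      ∑ t ∈ Finset.Icc 1 n, X t ω
        < (∑ t ∈ Finset.Icc 1 n, P t ω) / 2 - Real.log (1 / δ)} ⊆ ⋃ n, A n := by
    intro ω hω
    obtain ⟨n, hn⟩ := hω
    refine Set.mem_iUnion.2 ⟨n, ?_⟩
    have hkey : (1 : ℝ) / δ ≤ F X P n ω := by
      have hsum : Real.exp (∑ t ∈ Finset.Icc 1 n,
          ((1 - Real.exp (-1)) * P t ω - X t ω)) ≤ F X P n ω := F_ge hP01 n ω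
      have hQ : 0 ≤ ∑ t ∈ Finset.Icc 1 n, P t ω :=
        Finset.sum_nonneg fun t _ => (hP01 t ω).1
      have ha : (1 : ℝ) / 2 ≤ 1 - Real.exp (-1) := by
        have := exp_neg_one_lt_half; linarith
      have hexp : Real.log (1 / δ) ≤ ∑ t ∈ Finset.Icc 1 n,
          ((1 - Real.exp (-1)) * P t ω - X t ω) := by
        rw [Finset.sum_sub_distrib, ← Finset.mul_sum]
        nlinarith [hn]
      calc (1 : ℝ) / δ = Real.exp (Real.log (1 / δ)) :=
            (Real.exp_log (by positivity)).symm
        _ ≤ Real.exp (∑ t ∈ Finset.Icc 1 n,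
            ((1 - Real.exp (-1)) * P t ω - X t ω)) := Real.exp_le_exp.2 hexp
        _ ≤ F X P n ω := hsum
    simp only [hA_def, Set.mem_setOf_eq]
    rw [hεcoe]
    exact le_trans hkey
      (Finset.le_sup' (fun k => F X P k ω) (Finset.self_mem_range_succ n))
  calc μ {ω | ∃ n : ℕ,
      ∑ t ∈ Finset.Icc 1 n, X t ω
        < (∑ t ∈ Finset.Icc 1 n, P t ω) / 2 - Real.log (1 / δ)}
      ≤ μ (⋃ n, A n) := measure_mono hsubset
    _ = ⨆ n, μ (A n) := hmono.directed_le.measure_iUnion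
    _ ≤ ENNReal.ofReal δ := iSup_le hAbound
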